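/- Let n ≥ 1, 0 ≤ m ≤ n, and let T = conv(v₀,…,v_m) be an m-simplex in ℝⁿ with rational vertices. Then T is regular if and only if for every nonempty face F of T and every rational point r lying in the relative interior of F, the denominator of r is greater than or equal to the sum of the denominators of the vertices of F. -/

import Mathlib

/-- `y` is in the `GL(n,ℤ) ⋉ ℤⁿ`-orbit of `x`, i.e. `y = U x + t` for an integer
matrix `U` with `det U = ±1` and an integer vector `t`. -/
def SameOrbit (n : ℕ) (x y : Fin n → ℝ) : Prop :=
  ∃ (U : Matrix (Fin n) (Fin n) ℤ) (t : Fin n → ℤ),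
    (U.det = 1 ∨ U.det = -1) ∧
    ∀ i, y i = (∑ j, (U i j : ℝ) * x j) + (t i : ℝ)

/-- The subgroup `G_x = ℤ + ℤx₁ + ⋯ + ℤxₙ` of the additive reals. -/
def Gx {n : ℕ} (x : Fin n → ℝ) : AddSubgroup ℝ :=
  AddSubgroup.closure (insert (1 : ℝ) (Set.range x))

/-- A point of `ℝⁿ` is rational if all its coordinates are rational. -/
def IsRationalPoint {n : ℕ} (y : Fin n → ℝ) : Prop :=
  ∀ i, ∃ q : ℚ, y i = (q : ℝ)

/-- The denominator of a rational point: the least positive integer `d`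
with `d • y ∈ ℤⁿ`. -/
noncomputable def den {n : ℕ} (y : Fin n → ℝ) : ℕ :=
  sInf {d : ℕ | 0 < d ∧ ∀ i, ∃ m : ℤ, (d : ℝ) * y i = (m : ℝ)}

/-- The homogeneous correspondent `ỹ = den(y)·(y,1)`, viewed as a real vector. -/
noncomputable def tildeR {n : ℕ} (y : Fin n → ℝ) : Fin (n + 1) → ℝ :=
  fun i => (den y : ℝ) * (Fin.snoc y (1 : ℝ) : Fin (n + 1) → ℝ) i

/-- A rational `m`-simplex `conv(v₀,…,v_m) ⊆ ℝⁿ` is regular if the homogeneous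
correspondents `ṽ₀,…,ṽ_m ∈ ℤ^{n+1}` can be extended to a ℤ-basis of `ℤ^{n+1}`. -/
def IsRegularSimplex {n m : ℕ} (v : Fin (m + 1) → (Fin n → ℝ)) : Prop :=
  AffineIndependent ℝ v ∧ (∀ k, IsRationalPoint (v k)) ∧
  ∃ (b : Module.Basis (Fin (n + 1)) ℤ (Fin (n + 1) → ℤ)) (f : Fin (m + 1) ↪ Fin (n + 1)),
    ∀ k i, ((b (f k)) i : ℝ) = tildeR (v k) i

/-- A rational hyperplane in `ℝⁿ`. -/
def IsRatHyperplane {n : ℕ} (H : Set (Fin n → ℝ)) : Prop :=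
  ∃ (h : Fin n → ℚ) (k : ℚ), h ≠ 0 ∧ H = {z | (∑ i, (h i : ℝ) * z i) = (k : ℝ)}

/-- A rational affine space: an intersection of rational hyperplanes. -/
def IsRatAffineSpace {n : ℕ} (F : Set (Fin n → ℝ)) : Prop :=
  ∃ S : Set (Set (Fin n → ℝ)), (∀ H ∈ S, IsRatHyperplane H) ∧ F = ⋂₀ S

/-- `F_x`: the intersection of all rational hyperplanes containing `x`
(`= ℝⁿ` if there is no such hyperplane). -/
def Fx {n : ℕ} (x : Fin n → ℝ) : Set (Fin n → ℝ) :=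
  ⋂₀ {H | IsRatHyperplane H ∧ x ∈ H}

/-- The (affine) dimension of a subset of `ℝⁿ`. -/
noncomputable def affDim {n : ℕ} (F : Set (Fin n → ℝ)) : ℕ :=
  Module.finrank ℝ ↥(vectorSpan ℝ F)

/-- `d_F`: the least denominator of a rational point of `F`. -/
noncomputable def dF {n : ℕ} (F : Set (Fin n → ℝ)) : ℕ :=
  sInf {d : ℕ | ∃ y ∈ F, IsRationalPoint y ∧ den y = d}

/-- `c_F`: the smallest possible denominator of a vertex of a regular `n`-simplex
`conv(v₀,…,v_n) ⊆ ℝⁿ` with `v₀,…,v_e ∈ F`. -/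
noncomputable def cF {n : ℕ} (e : ℕ) (F : Set (Fin n → ℝ)) : ℕ :=
  sInf {c : ℕ | ∃ (v : Fin (n + 1) → (Fin n → ℝ)) (i : Fin (n + 1)),
    IsRegularSimplex v ∧ (∀ k : Fin (n + 1), (k : ℕ) ≤ e → v k ∈ F) ∧ den (v i) = c}

/-- `c_x = c_{F_x}`. -/
noncomputable def cx {n : ℕ} (x : Fin n → ℝ) : ℕ := cF (affDim (Fx x)) (Fx x)

/-- Membership in the Farey sequence `𝔉_d`. -/
def InFarey (d : ℕ) (x : ℚ) : Prop := 0 ≤ x ∧ x ≤ 1 ∧ x.den ≤ d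

/-- `x` and `y` are neighbors (contiguous elements) of the Farey sequence `𝔉_d`. -/
def FareyNeighbor (d : ℕ) (x y : ℚ) : Prop :=
  InFarey d x ∧ InFarey d y ∧ x ≠ y ∧
  ∀ t : ℚ, InFarey d t → ¬ (min x y < t ∧ t < max x y)

/-- `y` is the companion of `x`: `comp 0 = 1`, `comp 1 = 0`, `comp (1/2) = 1`, and
for denominator `d ≥ 3`, `comp x` is the neighbor of `x` in `𝔉_d` with smaller
denominator than the other neighbor. -/
def IsCompanion (x y : ℚ) : Prop :=
  (x = 0 ∧ y = 1) ∨ (x = 1 ∧ y = 0) ∨ (x = 1/2 ∧ y = 1) ∨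
  (3 ≤ x.den ∧ FareyNeighbor x.den x y ∧
    ∀ z : ℚ, FareyNeighbor x.den x z → z ≠ y → y.den < z.den)

section Helpers
open Set

lemma den_mem {n : ℕ} {y : Fin n → ℝ} (hy : IsRationalPoint y) :
    0 < den y ∧ ∀ i, ∃ m : ℤ, (den y : ℝ) * y i = (m : ℝ) := by
  have hne : {d : ℕ | 0 < d ∧ ∀ i, ∃ m : ℤ, (d : ℝ) * y i = (m : ℝ)}.Nonempty := by
    choose q hq using hy
    refine ⟨∏ i, (q i).den, Finset.prod_pos fun i _ => (q i).pos, fun i => ?_⟩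
    obtain ⟨t, ht⟩ := Finset.dvd_prod_of_mem (fun j => (q j).den) (Finset.mem_univ i)
    refine ⟨t * (q i).num, ?_⟩
    rw [hq i]
    have h1 : ((q i).den : ℚ) * (q i) = ((q i).num : ℚ) := by
      rw [mul_comm]; exact Rat.mul_den_eq_num (q i)
    have h2 : ((q i).den : ℝ) * (q i : ℝ) = ((q i).num : ℝ) := by exact_mod_cast h1
    push_cast [ht]
    rw [mul_comm ((q i).den : ℝ) (t:ℝ), mul_assoc, h2]
  exact Nat.sInf_mem hne

lemma den_le {n : ℕ} {y : Fin n → ℝ} {d : ℕ} (hd : 0 < d)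
    (h : ∀ i, ∃ m : ℤ, (d : ℝ) * y i = (m : ℝ)) : den y ≤ d :=
  Nat.sInf_le ⟨hd, h⟩

lemma relint_char {N : ℕ} {ι : Type} [Fintype ι] [Nonempty ι]
    {w : ι → (Fin N → ℝ)} (hw : AffineIndependent ℝ w) (x : Fin N → ℝ) :
    x ∈ intrinsicInterior ℝ (convexHull ℝ (Set.range w)) ↔
      ∃ lam : ι → ℝ, (∀ i, 0 < lam i) ∧ (∑ i, lam i) = 1 ∧ (∑ i, lam i • w i) = x := by
  rcases subsingleton_or_nontrivial ι with hsub | hnt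
  · -- singleton case
    have i0 : ι := Classical.arbitrary ι
    have hr : Set.range w = {w i0} := by
      ext z; simp only [mem_range, mem_singleton_iff]
      constructor
      · rintro ⟨i, rfl⟩; rw [Subsingleton.elim i i0]
      · rintro rfl; exact ⟨i0, rfl⟩
    have hcard : (Finset.univ : Finset ι) = {i0} := by
      ext i; simp [Subsingleton.elim i i0]
    rw [hr, convexHull_singleton, intrinsicInterior_singleton, mem_singleton_iff]
    constructor
    · rintro rfl
      exact ⟨fun _ => 1, fun _ => one_pos, by rw [hcard]; simp, by rw [hcard]; simp⟩
    · rintro ⟨lam, hpos, hsum, hx⟩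
      rw [hcard] at hsum hx
      simp only [Finset.sum_singleton] at hsum hx
      rw [← hx, hsum, one_smul]
  · -- nontrivial case
    set s := convexHull ℝ (Set.range w) with hs
    have hsne : s.Nonempty := ⟨w (Classical.arbitrary ι), subset_convexHull _ _ (mem_range_self _)⟩
    haveI : Nonempty s := hsne.to_subtype
    haveI : Nonempty (affineSpan ℝ s) := by
      obtain ⟨p, hp⟩ := hsne
      exact ⟨⟨p, subset_affineSpan _ _ hp⟩⟩
    have hmem : ∀ i, w i ∈ affineSpan ℝ s :=
      fun i => subset_affineSpan _ _ (subset_convexHull _ _ (mem_range_self i))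
    set w' : ι → affineSpan ℝ s := fun i => ⟨w i, hmem i⟩ with hw'def
    have hw' : AffineIndependent ℝ w' := by
      apply AffineIndependent.of_comp ((affineSpan ℝ s).subtype)
      exact hw
    have hcomb : ∀ (t : Finset ι) (ω : ι → ℝ), t.sum ω = 1 →
        ((t.affineCombination ℝ w' ω : affineSpan ℝ s) : Fin N → ℝ)
          = t.affineCombination ℝ w ω := by
      intro t ω h
      have h2 := Finset.map_affineCombination t w' ω h ((affineSpan ℝ s).subtype)
      have h3 : ((affineSpan ℝ s).subtype) ∘ w' = w := rfl
      rw [h3] at h2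
      exact h2
    have htot : affineSpan ℝ (Set.range w') = ⊤ := by
      refine top_unique ?_
      rw [← affineSpan_coe_preimage_eq_top s]
      refine affineSpan_le.2 ?_
      rintro y hy
      have hy2 : (y : Fin N → ℝ) ∈ convexHull ℝ (Set.range w) := hy
      rw [convexHull_range_eq_exists_affineCombination] at hy2
      obtain ⟨t, ω, hω, hω1, hcy⟩ := hy2
      have : (y : Fin N → ℝ) = ((t.affineCombination ℝ w' ω : affineSpan ℝ s) : Fin N → ℝ) := by
        rw [hcomb t ω hω1, hcy]
      have hy' : y = t.affineCombination ℝ w' ω := Subtype.coe_injective this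
      rw [hy']
      exact affineCombination_mem_affineSpan hω1 w'
    let b : AffineBasis ι ℝ (affineSpan ℝ s) := ⟨w', hw', htot⟩
    have hbw : ⇑b = w' := rfl
    have hcoordx : ∀ (y : affineSpan ℝ s), (y : Fin N → ℝ) ∈ s ↔ ∀ i, 0 ≤ b.coord i y := by
      intro y
      constructor
      · intro hy
        have hy2 : (y : Fin N → ℝ) ∈ convexHull ℝ (Set.range w) := hy
        rw [convexHull_range_eq_exists_affineCombination] at hy2
        obtain ⟨t, ω, hω, hω1, hcy⟩ := hy2
        have hy' : y = t.affineCombination ℝ w' ω := by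
          apply Subtype.coe_injective
          show (y : Fin N → ℝ) = ((t.affineCombination ℝ w' ω : affineSpan ℝ s) : Fin N → ℝ)
          rw [hcomb t ω hω1, hcy]
        intro i
        rw [hy', ← hbw]
        by_cases hi : i ∈ t
        · rw [b.coord_apply_combination_of_mem hi hω1]
          exact hω i hi
        · rw [b.coord_apply_combination_of_notMem hi hω1]
      · intro hc
        have hself := b.affineCombination_coord_eq_self y
        rw [hbw] at hself
        have h2 := hcomb Finset.univ (fun i => b.coord i y) (b.sum_coord_apply_eq_one y)
        rw [hself] at h2
        have hmem2 : Finset.univ.affineCombination ℝ w (fun i => b.coord i y) ∈ s :=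
          affineCombination_mem_convexHull (fun i _ => hc i) (b.sum_coord_apply_eq_one y)
        rwa [← h2] at hmem2
    have hpre : ((↑) ⁻¹' s : Set (affineSpan ℝ s)) = ⋂ i, b.coord i ⁻¹' Ici 0 := by
      ext y
      simp only [mem_preimage, mem_iInter, hcoordx y, mem_Ici]
    have key : interior ((↑) ⁻¹' s : Set (affineSpan ℝ s)) = ⋂ i, b.coord i ⁻¹' Ioi 0 := by
      rw [hpre, interior_iInter_of_finite]
      refine iInter_congr fun i => ?_
      have ho := @isOpenMap_barycentric_coord ι ℝ (affineSpan ℝ s).direction (affineSpan ℝ s) _ _ _ _ _ _ _ b i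
      have hc := @continuous_barycentric_coord ι ℝ (affineSpan ℝ s).direction (affineSpan ℝ s) _ _ _ _ _ _ _ b i
      have he : b.coord i ⁻¹' interior (Ici 0) = interior (b.coord i ⁻¹' Ici 0) :=
        ho.preimage_interior_eq_interior_preimage hc _
      rw [← he, interior_Ici]
    constructor
    · intro hx
      obtain ⟨y, hy, rfl⟩ := mem_intrinsicInterior.1 hx
      rw [key, mem_iInter] at hy
      refine ⟨fun i => b.coord i y, fun i => hy i, b.sum_coord_apply_eq_one y, ?_⟩
      have hself := b.affineCombination_coord_eq_self y
      rw [hbw] at hself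
      have h2 := hcomb Finset.univ (fun i => b.coord i y) (b.sum_coord_apply_eq_one y)
      rw [hself] at h2
      rw [h2, Finset.univ.affineCombination_eq_linear_combination w _
        (b.sum_coord_apply_eq_one y)]
    · rintro ⟨lam, hpos, hsum, hx⟩
      have hxc : Finset.univ.affineCombination ℝ w lam = x := by
        rw [Finset.univ.affineCombination_eq_linear_combination w lam hsum, hx]
      have hxs : x ∈ s := by
        rw [← hxc]
        exact affineCombination_mem_convexHull (fun i _ => (hpos i).le) hsum
      refine mem_intrinsicInterior.2 ⟨⟨x, subset_affineSpan _ _ hxs⟩, ?_, rfl⟩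
      rw [key, mem_iInter]
      intro i
      have hcmb := hcomb Finset.univ lam hsum
      have hy' : (⟨x, subset_affineSpan _ _ hxs⟩ : affineSpan ℝ s)
          = Finset.univ.affineCombination ℝ w' lam := by
        apply Subtype.coe_injective
        show x = ((Finset.univ.affineCombination ℝ w' lam : affineSpan ℝ s) : Fin N → ℝ)
        rw [hcmb, hxc]
      rw [mem_preimage, hy', ← hbw, b.coord_apply_combination_of_mem (Finset.mem_univ i) hsum]
      exact hpos i

lemma basis_rows_indep {K : ℕ} (b : Module.Basis (Fin K) ℤ (Fin K → ℤ)) (g : Fin K → ℝ)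
    (hg : ∀ j, ∑ i, g i * ((b i j : ℤ) : ℝ) = 0) : ∀ i, g i = 0 := by
  classical
  let e := Pi.basisFun ℤ (Fin K)
  haveI := e.invertibleToMatrix b
  have hdet : IsUnit (e.toMatrix ⇑b).det := Matrix.isUnit_det_of_invertible _
  set A : Matrix (Fin K) (Fin K) ℝ := (e.toMatrix ⇑b).map (Int.cast : ℤ → ℝ) with hA
  have hdetA : IsUnit A.det := by
    have : A = (Int.castRingHom ℝ).mapMatrix (e.toMatrix ⇑b) := rfl
    rw [this, ← RingHom.map_det]
    rcases Int.isUnit_iff.mp hdet with h | h <;> rw [h] <;> simp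
  have hentry : ∀ i j, A i j = ((b j i : ℤ) : ℝ) := by
    intro i j
    simp [hA, Matrix.map_apply, Module.Basis.toMatrix_apply, e, Pi.basisFun_repr]
  have hmul : A.mulVec g = 0 := by
    funext j
    simp only [Matrix.mulVec, dotProduct, hentry, Pi.zero_apply]
    rw [← hg j]
    exact Finset.sum_congr rfl fun i _ => mul_comm _ _
  have h0 : A⁻¹.mulVec (A.mulVec g) = g := by
    rw [Matrix.mulVec_mulVec, Matrix.nonsing_inv_mul A hdetA, Matrix.one_mulVec]
  intro i
  rw [← h0, hmul]
  simp [Matrix.mulVec_zero]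

lemma exists_basis_extension {K mm : ℕ} (u : Fin mm → (Fin K → ℤ))
    (hind : LinearIndependent ℤ u)
    (hsat : ∀ (c : ℤ) (x : Fin K → ℤ), c ≠ 0 →
      c • x ∈ Submodule.span ℤ (Set.range u) → x ∈ Submodule.span ℤ (Set.range u)) :
    ∃ (b : Module.Basis (Fin K) ℤ (Fin K → ℤ)) (f : Fin mm ↪ Fin K), ∀ k, b (f k) = u k := by
  classical
  set L : Submodule ℤ (Fin K → ℤ) := Submodule.span ℤ (Set.range u) with hL
  haveI : NoZeroSMulDivisors ℤ ((Fin K → ℤ) ⧸ L) := by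
    constructor
    intro c x hcx
    by_cases hc : c = 0
    · exact Or.inl hc
    · right
      obtain ⟨w, rfl⟩ := Submodule.Quotient.mk_surjective L x
      rw [← Submodule.Quotient.mk_smul, Submodule.Quotient.mk_eq_zero] at hcx
      exact (Submodule.Quotient.mk_eq_zero L).mpr (hsat c w hc hcx)
  haveI : Module.Finite ℤ ((Fin K → ℤ) ⧸ L) := Module.Finite.of_surjective L.mkQ L.mkQ_surjective
  haveI : Module.Free ℤ ((Fin K → ℤ) ⧸ L) := Module.free_of_finite_type_torsion_free'
  obtain ⟨sec, hsec⟩ := Module.projective_lifting_property L.mkQ LinearMap.id L.mkQ_surjective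
  have hmemL : ∀ x : Fin K → ℤ, x - sec (L.mkQ x) ∈ L := by
    intro x
    have : L.mkQ (x - sec (L.mkQ x)) = 0 := by
      have h1 : L.mkQ (sec (L.mkQ x)) = L.mkQ x := by
        have := congrArg (fun f => f (L.mkQ x)) hsec
        simpa using this
      rw [map_sub, h1, sub_self]
    rwa [← LinearMap.mem_ker, Submodule.ker_mkQ] at this
  let proj : (Fin K → ℤ) →ₗ[ℤ] L :=
    LinearMap.codRestrict L (LinearMap.id - sec ∘ₗ L.mkQ) hmemL
  have hproj : ∀ x : L, proj x = x := by
    intro x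
    apply Subtype.coe_injective
    have hx0 : L.mkQ (x : Fin K → ℤ) = 0 := (Submodule.Quotient.mk_eq_zero L).mpr x.2
    show (x : Fin K → ℤ) - sec (L.mkQ (x : Fin K → ℤ)) = (x : Fin K → ℤ)
    rw [hx0, map_zero, sub_zero]
  have hcompl : IsCompl L (LinearMap.ker proj) := LinearMap.isCompl_of_proj hproj
  let bL : Module.Basis (Fin mm) ℤ L := Module.Basis.span hind
  obtain ⟨kk, bR⟩ := Submodule.basisOfPid (Pi.basisFun ℤ (Fin K)) (LinearMap.ker proj)
  let e2 := Submodule.prodEquivOfIsCompl L (LinearMap.ker proj) hcompl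
  let bM : Module.Basis (Fin mm ⊕ Fin kk) ℤ (Fin K → ℤ) := (bL.prod bR).map e2
  let eq := bM.indexEquiv (Pi.basisFun ℤ (Fin K))
  refine ⟨bM.reindex eq, ⟨fun k => eq (Sum.inl k),
    fun a b h => Sum.inl.inj (eq.injective h)⟩, ?_⟩
  intro k
  show (bM.reindex eq) (eq (Sum.inl k)) = u k
  rw [Module.Basis.reindex_apply, Equiv.symm_apply_apply]
  show e2 ((bL.prod bR) (Sum.inl k)) = u k
  have h1 : (bL.prod bR) (Sum.inl k) = (bL k, 0) :=
    Prod.ext (Module.Basis.prod_apply_inl_fst bL bR k) (Module.Basis.prod_apply_inl_snd bL bR k)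
  rw [h1]
  have h2 : e2 (bL k, (0 : LinearMap.ker proj)) =
      ((bL k : Fin K → ℤ) + (((0 : LinearMap.ker proj) : Fin K → ℤ))) :=
    Submodule.coe_prodEquivOfIsCompl' L (LinearMap.ker proj) hcompl (bL k, 0)
  rw [h2]
  simp only [ZeroMemClass.coe_zero, add_zero]
  exact congrArg Subtype.val (Module.Basis.span_apply hind k)

end Helpers

/-- An `m`-simplex `T = conv(v₀,…,v_m) ⊆ ℝⁿ` with rational vertices
is regular iff for every nonempty face `F` of `T` and every rational point `r` in the
relative interior of `F`, `den(r)` is at least the sum of the denominators of the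
vertices of `F`. -/
theorem regular_iff_denominator_of_faces (n m : ℕ) (hn : 1 ≤ n) (hm : m ≤ n)
    (v : Fin (m + 1) → (Fin n → ℝ))
    (hrat : ∀ k, IsRationalPoint (v k)) (haff : AffineIndependent ℝ v) :
    IsRegularSimplex v ↔
      ∀ S : Finset (Fin (m + 1)), S.Nonempty →
        ∀ r : Fin n → ℝ, IsRationalPoint r →
          r ∈ intrinsicInterior ℝ (convexHull ℝ (v '' (S : Set (Fin (m + 1))))) →
          (∑ k ∈ S, den (v k)) ≤ den r := by
  classical
  have hden := fun k => den_mem (hrat k)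
  have hdpos : ∀ k, (0:ℝ) < den (v k) := fun k => by exact_mod_cast (hden k).1
  -- integer homogeneous correspondents
  have hUex : ∀ k i, ∃ z : ℤ, ((z : ℤ) : ℝ) = (den (v k) : ℝ) * v k i := by
    intro k i; obtain ⟨z, hz⟩ := (hden k).2 i; exact ⟨z, hz.symm⟩
  choose U hU using hUex
  set tz : Fin (m+1) → (Fin (n+1) → ℤ) :=
    fun k => Fin.snoc (U k) ((den (v k) : ℤ)) with htzdef
  have htz : ∀ k i, ((tz k i : ℤ) : ℝ) = tildeR (v k) i := by
    intro k i
    refine Fin.lastCases ?_ (fun j => ?_) i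
    · simp [htzdef, tildeR, Fin.snoc_last]
    · simp [htzdef, tildeR, Fin.snoc_castSucc, hU]
  have htildeR_last : ∀ k, tildeR (v k) (Fin.last n) = (den (v k) : ℝ) := by
    intro k; simp [tildeR, Fin.snoc_last]
  have htildeR_cast : ∀ k (j : Fin n),
      tildeR (v k) (Fin.castSucc j) = (den (v k) : ℝ) * v k j := by
    intro k j; simp [tildeR, Fin.snoc_castSucc]
  -- linear independence of tz over ℤ
  have htzind : LinearIndependent ℤ tz := by
    rw [Fintype.linearIndependent_iff]
    intro g hg k
    have hgR : ∀ i : Fin (n+1), ∑ kk, (g kk : ℝ) * tildeR (v kk) i = 0 := by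
      intro i
      have h0 := congrFun hg i
      have h2 : ∑ kk, (g kk * tz kk i) = 0 := by
        simpa [Finset.sum_apply, Pi.smul_apply, smul_eq_mul] using h0
      calc ∑ kk, (g kk:ℝ) * tildeR (v kk) i
          = ∑ kk, ((g kk * tz kk i : ℤ) : ℝ) := by
            refine Finset.sum_congr rfl fun kk _ => ?_
            rw [← htz]; push_cast; ring
        _ = (((∑ kk, g kk * tz kk i : ℤ)) : ℝ) := by push_cast; rfl
        _ = 0 := by rw [h2]; simp
    have hw0 : ∑ kk, ((g kk : ℝ) * den (v kk)) = 0 := by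
      have := hgR (Fin.last n)
      simpa [htildeR_last] using this
    have hw1 : ∑ kk, ((g kk : ℝ) * den (v kk)) • v kk = 0 := by
      funext j
      have := hgR (Fin.castSucc j)
      simpa [htildeR_cast, Finset.sum_apply, Pi.smul_apply, smul_eq_mul, mul_assoc] using this
    have hzero := haff.eq_zero_of_sum_eq_zero hw0 hw1 k (Finset.mem_univ k)
    have : (g k : ℝ) = 0 := by
      rcases mul_eq_zero.mp hzero with h | h
      · exact h
      · exact absurd h (ne_of_gt (hdpos k))
    exact_mod_cast this
  constructor
  · -- regular → denominator condition
    rintro ⟨-, -, b, f, hbf⟩ S hSne r hr hrint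
    haveI : Nonempty {x // x ∈ S} := ⟨⟨hSne.choose, hSne.choose_spec⟩⟩
    have haffS : AffineIndependent ℝ (fun k : {x // x ∈ S} => v ↑k) :=
      haff.comp_embedding (Function.Embedding.subtype _)
    rw [Set.image_eq_range] at hrint
    obtain ⟨lam, hlpos, hlsum, hlcomb⟩ := (relint_char haffS r).mp hrint
    have hrden := den_mem hr
    have hrdpos : (0:ℝ) < (den r : ℝ) := by exact_mod_cast hrden.1
    have hWex : ∀ i, ∃ z : ℤ,
        ((z : ℤ) : ℝ) = (den r : ℝ) * (Fin.snoc r (1:ℝ) : Fin (n+1) → ℝ) i := by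
      intro i
      refine Fin.lastCases ?_ (fun j => ?_) i
      · exact ⟨(den r : ℤ), by simp [Fin.snoc_last]⟩
      · obtain ⟨z, hz⟩ := hrden.2 j
        exact ⟨z, by simpa [Fin.snoc_castSucc] using hz.symm⟩
    choose W hW using hWex
    set μ : {x // x ∈ S} → ℝ := fun k => (den r : ℝ) * lam k / (den (v ↑k) : ℝ) with hμdef
    have hμpos : ∀ k, 0 < μ k := fun k => div_pos (mul_pos hrdpos (hlpos k)) (hdpos ↑k)
    have hkey : ∀ i, (den r : ℝ) * (Fin.snoc r (1:ℝ) : Fin (n+1) → ℝ) i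
        = ∑ k : {x // x ∈ S}, μ k * tildeR (v ↑k) i := by
      intro i
      have hterm : ∀ k : {x // x ∈ S}, μ k * tildeR (v ↑k) i
          = (den r : ℝ) * lam k * (Fin.snoc (v ↑k) (1:ℝ) : Fin (n+1) → ℝ) i := by
        intro k
        show (den r : ℝ) * lam k / (den (v ↑k):ℝ) * tildeR (v ↑k) i = _
        have : tildeR (v ↑k) i = (den (v ↑k) : ℝ) * (Fin.snoc (v ↑k) (1:ℝ) : Fin (n+1) → ℝ) i := rfl
        rw [this]
        have hne : (den (v ↑k) : ℝ) ≠ 0 := ne_of_gt (hdpos ↑k)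
        field_simp
      rw [Finset.sum_congr rfl (fun k _ => hterm k)]
      refine Fin.lastCases ?_ (fun j => ?_) i
      · simp only [Fin.snoc_last, mul_one]
        rw [← Finset.mul_sum, hlsum, mul_one]
      · simp only [Fin.snoc_castSucc]
        have h1 := congrFun hlcomb j
        have h2 : ∑ k : {x // x ∈ S}, lam k * v (↑k) j = r j := by
          simpa [Finset.sum_apply, Pi.smul_apply, smul_eq_mul] using h1
        rw [← h2, Finset.mul_sum]
        exact Finset.sum_congr rfl fun k _ => by ring
    have hrepr : ∀ j, ((W j : ℤ) : ℝ) = ∑ i, ((b.repr W i : ℤ):ℝ) * ((b i j : ℤ):ℝ) := by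
      intro j
      have h0 : (∑ i, b.repr W i • b i) = W := b.sum_repr W
      have h1 := congrFun h0 j
      have h2 : ∑ i, (b.repr W i) * (b i j) = W j := by
        simpa [Finset.sum_apply, Pi.smul_apply, smul_eq_mul] using h1
      calc ((W j : ℤ):ℝ) = ((∑ i, b.repr W i * b i j : ℤ):ℝ) := by rw [h2]
        _ = ∑ i, ((b.repr W i : ℤ):ℝ) * ((b i j:ℤ):ℝ) := by push_cast; rfl
    set g2 : Fin (n+1) → ℝ := fun i => ∑ k : {x // x ∈ S}, if f ↑k = i then μ k else 0 with hg2
    have hg2sum : ∀ j, ∑ i, g2 i * ((b i j : ℤ):ℝ)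
        = ∑ k : {x // x ∈ S}, μ k * ((b (f ↑k) j : ℤ):ℝ) := by
      intro j
      simp only [hg2, Finset.sum_mul]
      rw [Finset.sum_comm]
      refine Finset.sum_congr rfl fun k _ => ?_
      simp only [ite_mul, zero_mul]
      rw [Finset.sum_ite_eq]
      simp
    have hzero : ∀ i, ((b.repr W i : ℤ):ℝ) - g2 i = 0 := by
      apply basis_rows_indep b
      intro j
      simp only [sub_mul]
      rw [Finset.sum_sub_distrib, ← hrepr j, hg2sum j]
      have hrw : ∑ k : {x // x ∈ S}, μ k * ((b (f ↑k) j : ℤ):ℝ)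
          = ∑ k : {x // x ∈ S}, μ k * tildeR (v ↑k) j :=
        Finset.sum_congr rfl fun k _ => by rw [hbf]
      rw [hrw, ← hkey j, ← hW j, sub_self]
    have hμint : ∀ k : {x // x ∈ S}, (1:ℝ) ≤ μ k := by
      intro k
      have h := hzero (f ↑k)
      have hg2v : g2 (f ↑k) = μ k := by
        show (∑ k' : {x // x ∈ S}, if f ↑k' = f ↑k then μ k' else 0) = μ k
        rw [Finset.sum_eq_single k]
        · simp
        · intro k' _ hk'
          rw [if_neg]
          intro hEq
          exact hk' (Subtype.ext (f.injective hEq))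
        · intro hk; exact absurd (Finset.mem_univ k) hk
      have heq : ((b.repr W (f ↑k) : ℤ):ℝ) = μ k := by
        rw [hg2v] at h; linarith
      have hbzpos : (0:ℤ) < b.repr W (f ↑k) := by
        have : (0:ℝ) < ((b.repr W (f ↑k):ℤ):ℝ) := heq ▸ hμpos k
        exact_mod_cast this
      have hz : (1:ℤ) ≤ b.repr W (f ↑k) := hbzpos
      calc (1:ℝ) ≤ ((b.repr W (f ↑k):ℤ):ℝ) := by exact_mod_cast hz
        _ = μ k := heq
    have hlastkey := hkey (Fin.last n)
    rw [Fin.snoc_last, mul_one] at hlastkey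
    have h3 : (den r : ℝ) = ∑ k : {x // x ∈ S}, μ k * (den (v ↑k) : ℝ) := by
      rw [hlastkey]
      exact Finset.sum_congr rfl fun k _ => by rw [htildeR_last]
    have h4 : ∑ k : {x // x ∈ S}, ((den (v ↑k) : ℕ):ℝ) ≤ (den r:ℝ) := by
      rw [h3]
      refine Finset.sum_le_sum fun k _ => ?_
      nlinarith [hμint k, hdpos (↑k : Fin (m+1))]
    have h5 : ((∑ k ∈ S, den (v k) : ℕ) : ℝ) ≤ (den r : ℝ) := by
      rw [Nat.cast_sum, ← Finset.sum_coe_sort S (fun k => ((den (v k) : ℕ):ℝ))]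
      exact h4
    exact_mod_cast h5
  · -- denominator condition → regular
    intro hcond
    refine ⟨haff, hrat, ?_⟩
    have hsat : ∀ (c : ℤ) (x : Fin (n+1) → ℤ), c ≠ 0 →
        c • x ∈ Submodule.span ℤ (Set.range tz) → x ∈ Submodule.span ℤ (Set.range tz) := by
      intro c x hc hcx
      rw [Submodule.mem_span_range_iff_exists_fun] at hcx
      obtain ⟨a, ha⟩ := hcx
      by_cases hdvd : ∀ k, c ∣ a k
      · rw [Submodule.mem_span_range_iff_exists_fun]
        refine ⟨fun k => a k / c, ?_⟩
        have hcx2 : c • (∑ k, (a k / c) • tz k) = c • x := by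
          rw [Finset.smul_sum, ← ha]
          refine Finset.sum_congr rfl fun k _ => ?_
          rw [smul_smul, Int.mul_ediv_cancel' (hdvd k)]
        exact smul_right_injective _ hc hcx2
      · exfalso
        push_neg at hdvd
        obtain ⟨k0, hk0⟩ := hdvd
        have hcQ : ((c:ℚ)) ≠ 0 := Int.cast_ne_zero.mpr hc
        have hcR : ((c:ℝ)) ≠ 0 := Int.cast_ne_zero.mpr hc
        set q : Fin (m+1) → ℚ := fun k => (a k : ℚ) / (c : ℚ) with hq
        set p : Fin (m+1) → ℚ := fun k => Int.fract (q k) with hp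
        have hp0 : ∀ k, 0 ≤ p k := fun k => Int.fract_nonneg _
        have hp1 : ∀ k, p k < 1 := fun k => Int.fract_lt_one _
        have hpk0 : p k0 ≠ 0 := by
          intro h0
          apply hk0
          refine ⟨⌊q k0⌋, ?_⟩
          have hqf : q k0 = (⌊q k0⌋ : ℚ) := by
            have h1 : q k0 - (⌊q k0⌋:ℚ) = Int.fract (q k0) := Int.self_sub_floor (q k0)
            have h2 : Int.fract (q k0) = 0 := h0
            rw [h2] at h1
            linarith
          have haq : (a k0 : ℚ) = (c : ℚ) * (⌊q k0⌋ : ℚ) := by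
            have : (a k0 : ℚ) / (c:ℚ) = (⌊q k0⌋:ℚ) := hqf
            field_simp at this
            linarith [this]
          exact_mod_cast haq
        have hxR : ∀ i, ((x i : ℤ):ℝ) = ∑ k, ((q k : ℚ):ℝ) * tildeR (v k) i := by
          intro i
          have h1 := congrFun ha i
          have h2 : ∑ k, a k * tz k i = c * x i := by
            simpa [Finset.sum_apply, Pi.smul_apply, smul_eq_mul] using h1
          have h3 : ∑ k, (a k : ℝ) * tildeR (v k) i = (c:ℝ) * ((x i : ℤ) : ℝ) := by
            calc ∑ k, (a k:ℝ) * tildeR (v k) i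
                = ∑ k, ((a k * tz k i : ℤ):ℝ) := by
                  refine Finset.sum_congr rfl fun k _ => ?_
                  rw [← htz]; push_cast; ring
              _ = ((∑ k, a k * tz k i : ℤ):ℝ) := by push_cast; rfl
              _ = (c:ℝ) * ((x i : ℤ) : ℝ) := by rw [h2]; push_cast; ring
          have h4 : ∀ k, ((q k : ℚ):ℝ) = (a k : ℝ) / (c : ℝ) := by
            intro k; rw [hq]; push_cast; ring
          rw [Finset.sum_congr rfl fun k _ => by rw [h4 k]]
          have h5 : ∑ k, (a k:ℝ)/(c:ℝ) * tildeR (v k) i = ((c:ℝ) * ((x i : ℤ):ℝ))/(c:ℝ) := by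
            rw [← h3, Finset.sum_div]
            exact Finset.sum_congr rfl fun k _ => by ring
          rw [h5, mul_div_cancel_left₀ _ hcR]
        set w' : Fin (n+1) → ℤ := fun i => x i - ∑ k, ⌊q k⌋ * tz k i with hw'
        have hw'R : ∀ i, ((w' i:ℤ):ℝ) = ∑ k, ((p k:ℚ):ℝ) * tildeR (v k) i := by
          intro i
          show ((x i - ∑ k, ⌊q k⌋ * tz k i : ℤ):ℝ) = _
          push_cast
          rw [hxR i, ← Finset.sum_sub_distrib]
          refine Finset.sum_congr rfl fun k _ => ?_
          rw [← htz k i]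
          have hpe : ((p k : ℚ):ℝ) = ((q k:ℚ):ℝ) - ((⌊q k⌋:ℤ):ℝ) := by
            have : p k = q k - (⌊q k⌋:ℚ) := (Int.self_sub_floor (q k)).symm
            rw [this]; push_cast; ring
          rw [hpe]; ring
        set N : ℤ := w' (Fin.last n) with hN
        have hNR : (N:ℝ) = ∑ k, ((p k:ℚ):ℝ) * (den (v k):ℝ) := by
          rw [hN, hw'R]
          exact Finset.sum_congr rfl fun k _ => by rw [htildeR_last]
        have hpk0R : (0:ℝ) < ((p k0:ℚ):ℝ) := by
          have : (0:ℚ) < p k0 := lt_of_le_of_ne (hp0 k0) (Ne.symm hpk0)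
          exact_mod_cast this
        have hNpos : (0:ℝ) < (N:ℝ) := by
          rw [hNR]
          refine Finset.sum_pos' (fun k _ => mul_nonneg ?_ (le_of_lt (hdpos k)))
            ⟨k0, Finset.mem_univ k0, mul_pos hpk0R (hdpos k0)⟩
          exact_mod_cast hp0 k
        have hNposZ : 0 < N := by exact_mod_cast hNpos
        set rr : Fin n → ℝ := fun j => ((w' (Fin.castSucc j) : ℤ):ℝ) / (N:ℝ) with hrr
        have hrrQ : IsRationalPoint rr := by
          intro j
          refine ⟨((w' (Fin.castSucc j) : ℤ) : ℚ) / ((N:ℤ):ℚ), ?_⟩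
          show ((w' (Fin.castSucc j) : ℤ):ℝ) / (N:ℝ) = _
          push_cast
          ring
        set SS : Finset (Fin (m+1)) := Finset.univ.filter (fun k => p k ≠ 0) with hSS
        have hk0S : k0 ∈ SS := by simp [hSS, hpk0]
        have hSne : SS.Nonempty := ⟨k0, hk0S⟩
        have hsub : ∀ (h : Fin (m+1) → ℝ),
            ∑ k ∈ SS, ((p k:ℚ):ℝ) * h k = ∑ k, ((p k:ℚ):ℝ) * h k := by
          intro h
          apply Finset.sum_subset (Finset.subset_univ SS)
          intro k _ hk
          have hpz : p k = 0 := by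
            by_contra hne
            exact hk (by rw [hSS]; exact Finset.mem_filter.mpr ⟨Finset.mem_univ k, hne⟩)
          simp [hpz]
        haveI : Nonempty {y // y ∈ SS} := ⟨⟨k0, hk0S⟩⟩
        set lam : {y // y ∈ SS} → ℝ :=
          fun k => ((p ↑k:ℚ):ℝ) * (den (v ↑k):ℝ) / (N:ℝ) with hlam
        have hlpos : ∀ k : {y // y ∈ SS}, 0 < lam k := by
          intro k
          have hpk : p ↑k ≠ 0 := by
            exact (Finset.mem_filter.mp k.2).2
          have hpkR : (0:ℝ) < ((p ↑k:ℚ):ℝ) := by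
            have : (0:ℚ) < p ↑k := lt_of_le_of_ne (hp0 ↑k) (Ne.symm hpk)
            exact_mod_cast this
          exact div_pos (mul_pos hpkR (hdpos ↑k)) hNpos
        have hsumS : ∑ k : {y // y ∈ SS}, ((p ↑k:ℚ):ℝ) * (den (v ↑k):ℝ) = (N:ℝ) := by
          rw [Finset.sum_coe_sort SS (fun k => ((p k:ℚ):ℝ) * (den (v k):ℝ))]
          rw [hsub (fun k => (den (v k):ℝ)), hNR]
        have hlsum : ∑ k : {y // y ∈ SS}, lam k = 1 := by
          rw [hlam]
          rw [← Finset.sum_div, hsumS, div_self (ne_of_gt hNpos)]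
        have hlcomb : ∑ k : {y // y ∈ SS}, lam k • v ↑k = rr := by
          funext j
          rw [Finset.sum_apply]
          have hnum : ∑ k : {y // y ∈ SS}, ((p ↑k:ℚ):ℝ) * (den (v ↑k):ℝ) * v (↑k) j
              = ((w' (Fin.castSucc j) : ℤ):ℝ) := by
            have e1 : ∑ k : {y // y ∈ SS}, ((p ↑k:ℚ):ℝ) * (den (v ↑k):ℝ) * v (↑k) j
                = ∑ k ∈ SS, ((p k:ℚ):ℝ) * ((den (v k):ℝ) * v k j) := by
              rw [← Finset.sum_coe_sort SS (fun k => ((p k:ℚ):ℝ) * ((den (v k):ℝ) * v k j))]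
              exact Finset.sum_congr rfl fun k _ => mul_assoc _ _ _
            rw [e1, hsub (fun k => (den (v k):ℝ) * v k j), hw'R (Fin.castSucc j)]
            exact (Finset.sum_congr rfl fun k _ => by rw [htildeR_cast]).symm
          calc ∑ k : {y // y ∈ SS}, (lam k • v ↑k) j
              = ∑ k : {y // y ∈ SS}, ((p ↑k:ℚ):ℝ) * (den (v ↑k):ℝ) * v (↑k) j / (N:ℝ) := by
                refine Finset.sum_congr rfl fun k _ => ?_
                show lam k * v (↑k) j = _
                rw [hlam]
                ring
            _ = (∑ k : {y // y ∈ SS}, ((p ↑k:ℚ):ℝ) * (den (v ↑k):ℝ) * v (↑k) j) / (N:ℝ) := by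
                rw [Finset.sum_div]
            _ = rr j := by rw [hnum]
        have haffS : AffineIndependent ℝ (fun k : {y // y ∈ SS} => v ↑k) :=
          haff.comp_embedding (Function.Embedding.subtype _)
        have hrel : rr ∈ intrinsicInterior ℝ (convexHull ℝ (v '' (SS : Set (Fin (m+1))))) := by
          rw [Set.image_eq_range]
          exact (relint_char haffS rr).mpr ⟨lam, hlpos, hlsum, hlcomb⟩
        have hge := hcond SS hSne rr hrrQ hrel
        have hle : den rr ≤ N.toNat := by
          refine den_le ?_ ?_
          · omega
          · intro j
            refine ⟨w' (Fin.castSucc j), ?_⟩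
            have hNt : ((N.toNat : ℕ):ℝ) = (N:ℝ) := by
              rw [← Int.cast_natCast, Int.toNat_of_nonneg hNposZ.le]
            rw [hNt]
            show (N:ℝ) * (((w' (Fin.castSucc j) : ℤ):ℝ) / (N:ℝ)) = _
            field_simp
        have hstrict : (N:ℝ) < ∑ k ∈ SS, (den (v k):ℝ) := by
          have hNS : (N:ℝ) = ∑ k ∈ SS, ((p k:ℚ):ℝ) * (den (v k):ℝ) := by
            rw [hsub (fun k => (den (v k):ℝ)), hNR]
          rw [hNS]
          refine Finset.sum_lt_sum_of_nonempty hSne fun k _ => ?_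
          have hpk1 : ((p k:ℚ):ℝ) < 1 := by exact_mod_cast hp1 k
          nlinarith [hdpos k]
        have hcast1 : ((∑ k ∈ SS, den (v k) : ℕ):ℝ) ≤ (den rr : ℝ) := by exact_mod_cast hge
        have hcast2 : (den rr : ℝ) ≤ (N:ℝ) := by
          calc (den rr : ℝ) ≤ ((N.toNat:ℕ):ℝ) := by exact_mod_cast hle
            _ = (N:ℝ) := by rw [← Int.cast_natCast, Int.toNat_of_nonneg hNposZ.le]
        have hcast3 : ((∑ k ∈ SS, den (v k) : ℕ):ℝ) = ∑ k ∈ SS, (den (v k):ℝ) := by push_cast; rfl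
        rw [hcast3] at hcast1
        linarith
    obtain ⟨b, f, hb⟩ := exists_basis_extension tz htzind hsat
    exact ⟨b, f, fun k i => by rw [hb k]; exact htz k i⟩
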